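/- Let A ∈ B(H) be such that I − AA* is compact and, for every x ∈ H, ‖Aⁿx‖ → 0 and ‖A*ⁿx‖ → 0 as n → ∞. Then for every T ∈ B(H) the following are equivalent: (a) the set {A*ⁿTAⁿ : n ∈ ℕ} is relatively compact in the operator norm topology of B(H); (b) A*ⁿTAⁿ → 0 in operator norm; (c) T is a compact operator. -/

import Mathlib

open ContinuousLinearMap Filter Topology

section Aux

variable {H : Type*} [NormedAddCommGroup H] [InnerProductSpace ℂ H] [CompleteSpace H]

/-- If `f` is compact and `g` continuous linear, `f * g` is compact. -/
lemma aux_compact_mul_right (f g : H →L[ℂ] H) (hf : IsCompactOperator ⇑f) :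
    IsCompactOperator ⇑(f * g) := by
  have h := hf.comp_clm g
  have he : ⇑(f * g) = ⇑f ∘ ⇑g := rfl
  rw [he]; exact h

lemma aux_compact_mul_left (f g : H →L[ℂ] H) (hg : IsCompactOperator ⇑g) :
    IsCompactOperator ⇑(f * g) := by
  have h := hg.clm_comp f
  have he : ⇑(f * g) = ⇑f ∘ ⇑g := rfl
  rw [he]; exact h

/-- A bounded, strongly null sequence of operators composed with a compact operator
tends to zero in norm. -/
lemma aux_comp_compact_tendsto (S : ℕ → H →L[ℂ] H) {M : ℝ}
    (hM : ∀ n, ‖S n‖ ≤ M)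
    (hS : ∀ x : H, Tendsto (fun n => ‖S n x‖) atTop (𝓝 0))
    (K : H →L[ℂ] H) (hK : IsCompactOperator ⇑K) :
    Tendsto (fun n => ‖S n * K‖) atTop (𝓝 0) := by
  have hM0 : 0 ≤ M := le_trans (norm_nonneg _) (hM 0)
  rw [Metric.tendsto_atTop]
  intro ε hε
  set δ : ℝ := ε / (2 * (M + 1)) with hδdef
  have hδ : 0 < δ := by positivity
  have hC : IsCompact (closure (⇑K '' Metric.closedBall 0 1)) :=
    hK.isCompact_closure_image_closedBall 1
  obtain ⟨t, htfin, htcov⟩ := (Metric.totallyBounded_iff).mp hC.totallyBounded δ hδ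
  -- For every y in the finite set t, eventually ‖S n y‖ < ε/4
  have hev : ∀ᶠ n in atTop, ∀ y ∈ t, ‖S n y‖ < ε / 4 := by
    rw [htfin.eventually_all]
    intro y _
    have := (hS y).eventually (eventually_lt_nhds (show (0:ℝ) < ε/4 by positivity))
    exact this
  obtain ⟨N, hN⟩ := eventually_atTop.mp hev
  refine ⟨N, fun n hn => ?_⟩
  have key : ‖S n * K‖ ≤ M * δ + ε / 4 := by
    apply ContinuousLinearMap.opNorm_le_bound _ (by positivity)
    intro x
    rcases eq_or_ne x 0 with rfl | hx
    · simp
    · have hxn : 0 < ‖x‖ := norm_pos_iff.mpr hx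
      have hxc : (‖x‖ : ℂ) ≠ 0 := Complex.ofReal_ne_zero.mpr (ne_of_gt hxn)
      set u : H := (‖x‖ : ℂ)⁻¹ • x with hu
      have hun : ‖u‖ = 1 := by
        rw [hu, norm_smul, norm_inv, Complex.norm_real, Real.norm_eq_abs,
          abs_of_nonneg hxn.le, inv_mul_cancel₀ (ne_of_gt hxn)]
      have hmem : K u ∈ closure (⇑K '' Metric.closedBall 0 1) :=
        subset_closure ⟨u, by simp [Metric.mem_closedBall, hun], rfl⟩
      obtain ⟨y, hyt, hy⟩ := Set.mem_iUnion₂.mp (htcov hmem)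
      have hyd : ‖K u - y‖ < δ := by
        rw [← dist_eq_norm]; exact hy
      have hbound : ‖(S n) (K u)‖ ≤ M * δ + ε / 4 := by
        calc ‖(S n) (K u)‖ = ‖(S n) (K u - y) + (S n) y‖ := by
              rw [map_sub, sub_add_cancel]
          _ ≤ ‖(S n) (K u - y)‖ + ‖(S n) y‖ := norm_add_le _ _
          _ ≤ M * δ + ε / 4 := by
              gcongr
              · calc ‖(S n) (K u - y)‖ ≤ ‖S n‖ * ‖K u - y‖ := le_opNorm _ _
                  _ ≤ M * δ := by
                      apply mul_le_mul (hM n) hyd.le (norm_nonneg _) hM0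
              · exact (hN n hn y hyt).le
      have hxu : x = (‖x‖ : ℂ) • u := by
        rw [hu, smul_smul, mul_inv_cancel₀ hxc, one_smul]
      calc ‖(S n * K) x‖ = ‖x‖ * ‖(S n) (K u)‖ := by
            rw [ContinuousLinearMap.mul_apply]
            conv_lhs => rw [hxu]
            rw [map_smul, map_smul, norm_smul, Complex.norm_real, Real.norm_eq_abs,
              abs_of_nonneg hxn.le]
        _ ≤ ‖x‖ * (M * δ + ε / 4) := by
            apply mul_le_mul_of_nonneg_left hbound (norm_nonneg _)
        _ = (M * δ + ε / 4) * ‖x‖ := by ring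
  have hMδ : M * δ < ε / 2 := by
    rw [hδdef, ← mul_div_assoc, div_lt_div_iff₀ (by positivity) (by norm_num : (0:ℝ) < 2)]
    nlinarith
  calc dist ‖S n * K‖ 0 = ‖S n * K‖ := by
        rw [Real.dist_eq, sub_zero, abs_of_nonneg (norm_nonneg _)]
    _ ≤ M * δ + ε / 4 := key
    _ < ε := by linarith

end Aux

set_option maxHeartbeats 2000000 in
/-- **Proposition 2.6.** Let `A ∈ B(H)` with `I - AA*` compact, `‖Aⁿx‖ → 0` and
`‖A*ⁿx‖ → 0` for all `x ∈ H`. For `T ∈ B(H)` the following are equivalent: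
(a) `{A*ⁿTAⁿ : n ∈ ℕ}` is relatively compact in the operator norm topology;
(b) `A*ⁿTAⁿ → 0` in operator norm; (c) `T` is compact. -/
theorem stmt_5 {H : Type*} [NormedAddCommGroup H] [InnerProductSpace ℂ H]
    [CompleteSpace H] [TopologicalSpace.SeparableSpace H]
    (hinf : ¬ FiniteDimensional ℂ H)
    (A T : H →L[ℂ] H)
    (hA : IsCompactOperator (⇑((1 : H →L[ℂ] H) - A * adjoint A)))
    (hAn : ∀ x : H, Tendsto (fun n : ℕ => ‖(A ^ n) x‖) atTop (𝓝 0))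
    (hAsn : ∀ x : H, Tendsto (fun n : ℕ => ‖((adjoint A) ^ n) x‖) atTop (𝓝 0)) :
    List.TFAE
      [IsCompact (closure (Set.range fun n : ℕ => (adjoint A) ^ n * T * A ^ n)),
       Tendsto (fun n : ℕ => (adjoint A) ^ n * T * A ^ n) atTop (𝓝 0),
       IsCompactOperator ⇑T] := by
  set f : ℕ → H →L[ℂ] H := fun n => (adjoint A) ^ n * T * A ^ n with hf
  -- uniform bounds
  obtain ⟨M₁, hM₁⟩ : ∃ C, ∀ n : ℕ, ‖A ^ n‖ ≤ C := by
    apply banach_steinhaus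
    intro x
    obtain ⟨C, hC⟩ := (hAn x).bddAbove_range
    exact ⟨C, fun n => hC ⟨n, rfl⟩⟩
  obtain ⟨M₂, hM₂⟩ : ∃ C, ∀ n : ℕ, ‖(adjoint A) ^ n‖ ≤ C := by
    apply banach_steinhaus
    intro x
    obtain ⟨C, hC⟩ := (hAsn x).bddAbove_range
    exact ⟨C, fun n => hC ⟨n, rfl⟩⟩
  have hM₁0 : 0 ≤ M₁ := le_trans (norm_nonneg _) (hM₁ 0)
  have hM₂0 : 0 ≤ M₂ := le_trans (norm_nonneg _) (hM₂ 0)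
  -- adjoint of powers
  have hadj : ∀ n : ℕ, (adjoint A) ^ n = adjoint (A ^ n) := by
    intro n
    rw [← star_eq_adjoint, ← star_eq_adjoint, ← star_pow]
  -- weak convergence to zero
  have hweak : ∀ x y : H, Tendsto (fun n => (inner ℂ ((f n) x) y : ℂ)) atTop (𝓝 0) := by
    intro x y
    rw [tendsto_zero_iff_norm_tendsto_zero]
    apply squeeze_zero (fun n => norm_nonneg _)
      (g := fun n => ‖T‖ * (‖(A ^ n) x‖ * ‖(A ^ n) y‖))
    · intro n
      have : (f n) x = (adjoint (A ^ n)) (T ((A ^ n) x)) := by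
        simp [hf, ContinuousLinearMap.mul_apply, hadj]
      rw [this, adjoint_inner_left]
      calc ‖(inner ℂ (T ((A ^ n) x)) ((A ^ n) y) : ℂ)‖
          ≤ ‖T ((A ^ n) x)‖ * ‖(A ^ n) y‖ := norm_inner_le_norm _ _
        _ ≤ (‖T‖ * ‖(A ^ n) x‖) * ‖(A ^ n) y‖ := by
            apply mul_le_mul_of_nonneg_right (le_opNorm _ _) (norm_nonneg _)
        _ = ‖T‖ * (‖(A ^ n) x‖ * ‖(A ^ n) y‖) := by ring
    · have := ((hAn x).mul (hAn y)).const_mul ‖T‖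
      simpa using this
  tfae_have 1 → 2 := by
    intro hcpt
    by_contra hcon
    rw [Metric.tendsto_atTop] at hcon
    push_neg at hcon
    obtain ⟨ε, hε, hcon⟩ := hcon
    obtain ⟨φ, hφmono, hφ⟩ := extraction_of_frequently_atTop
      (frequently_atTop.mpr fun N => by
        obtain ⟨n, hn, hn'⟩ := hcon N; exact ⟨n, hn, hn'⟩)
    have hmem : ∀ k, (f ∘ φ) k ∈ closure (Set.range f) :=
      fun k => subset_closure ⟨φ k, rfl⟩
    obtain ⟨S, _, ψ, hψmono, hψ⟩ := hcpt.tendsto_subseq hmem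
    -- S = 0 via weak limits
    have hS0 : S = 0 := by
      ext x
      have hinner : ∀ y : H, (inner ℂ (S x) y : ℂ) = 0 := by
        intro y
        have h1 : Tendsto (fun k => (inner ℂ ((f (φ (ψ k))) x) y : ℂ)) atTop (𝓝 (inner ℂ (S x) y)) := by
          have hx : Tendsto (fun k => ((f ∘ φ ∘ ψ) k) x) atTop (𝓝 (S x)) :=
            ((ContinuousLinearMap.apply ℂ H x).continuous.tendsto S).comp hψ
          have := ((InnerProductSpace.toDualMap ℂ H y).continuous.tendsto (S x)).comp hx
          -- instead: use continuity of inner in first argument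
          exact (Continuous.tendsto (continuous_inner.comp
            (Continuous.prodMk continuous_id continuous_const)) (S x)).comp hx
        have h2 : Tendsto (fun k => (inner ℂ ((f (φ (ψ k))) x) y : ℂ)) atTop (𝓝 0) :=
          (hweak x y).comp ((hφmono.comp hψmono).tendsto_atTop)
        exact tendsto_nhds_unique h1 h2
      have := hinner (S x)
      rw [inner_self_eq_zero] at this
      simp [this]
    rw [hS0] at hψ
    have hdist : Tendsto (fun k => ‖(f ∘ φ ∘ ψ) k‖) atTop (𝓝 0) :=
      tendsto_zero_iff_norm_tendsto_zero.mp hψ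
    have hge : ∀ k, ε ≤ ‖(f ∘ φ ∘ ψ) k‖ := by
      intro k
      have := hφ (ψ k)
      rwa [dist_zero_right] at this
    have : ε ≤ 0 := le_of_tendsto_of_tendsto tendsto_const_nhds hdist
      (Eventually.of_forall hge)
    linarith
  tfae_have 2 → 1 := by
    intro h
    exact (h.isCompact_insert_range).of_isClosed_subset isClosed_closure
      (closure_minimal (Set.subset_insert _ _) h.isCompact_insert_range.isClosed)
  tfae_have 3 → 2 := by
    intro hT
    have hAdT : Tendsto (fun n => ‖(adjoint A) ^ n * T‖) atTop (𝓝 0) :=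
      aux_comp_compact_tendsto (fun n => (adjoint A) ^ n) hM₂ hAsn T hT
    rw [tendsto_iff_norm_sub_tendsto_zero]
    apply squeeze_zero (fun n => norm_nonneg _) (g := fun n => ‖(adjoint A) ^ n * T‖ * M₁)
    · intro n
      rw [sub_zero]
      calc ‖f n‖ = ‖((adjoint A) ^ n * T) * A ^ n‖ := by rw [hf]
        _ ≤ ‖(adjoint A) ^ n * T‖ * ‖A ^ n‖ := norm_mul_le _ _
        _ ≤ ‖(adjoint A) ^ n * T‖ * M₁ := by
            apply mul_le_mul_of_nonneg_left (hM₁ n) (norm_nonneg _)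
    · simpa using hAdT.mul_const M₁
  tfae_have 2 → 3 := by
    intro h2
    -- Kₙ := 1 - Aⁿ A*ⁿ is compact
    have hKn : ∀ n : ℕ, IsCompactOperator ⇑((1 : H →L[ℂ] H) - A ^ n * (adjoint A) ^ n) := by
      intro n
      induction n with
      | zero =>
        simp only [pow_zero, mul_one, sub_self]
        exact isCompactOperator_zero
      | succ n ih =>
        have heq : (1 : H →L[ℂ] H) - A ^ (n+1) * (adjoint A) ^ (n+1)
            = ((1 : H →L[ℂ] H) - A * adjoint A)
              + A * (((1 : H →L[ℂ] H) - A ^ n * (adjoint A) ^ n) * adjoint A) := by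
          rw [pow_succ' A n, pow_succ (adjoint A) n]
          noncomm_ring
        rw [heq]
        have h1 : IsCompactOperator
            ⇑(A * (((1 : H →L[ℂ] H) - A ^ n * (adjoint A) ^ n) * adjoint A)) :=
          aux_compact_mul_left A (((1 : H →L[ℂ] H) - A ^ n * (adjoint A) ^ n) * adjoint A)
            (aux_compact_mul_right ((1 : H →L[ℂ] H) - A ^ n * (adjoint A) ^ n) (adjoint A) ih)
        have hcoe : ⇑(((1 : H →L[ℂ] H) - A * adjoint A)
            + A * (((1 : H →L[ℂ] H) - A ^ n * (adjoint A) ^ n) * adjoint A))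
            = ⇑((1 : H →L[ℂ] H) - A * adjoint A)
              + ⇑(A * (((1 : H →L[ℂ] H) - A ^ n * (adjoint A) ^ n) * adjoint A)) := by
          ext x; simp
        rw [hcoe]
        exact hA.add h1
    -- Cₙ := T - Aⁿ (fₙ) A*ⁿ is compact
    set C : ℕ → H →L[ℂ] H := fun n => T - A ^ n * f n * (adjoint A) ^ n with hC
    have hCcpt : ∀ n, IsCompactOperator ⇑(C n) := by
      intro n
      set K := (1 : H →L[ℂ] H) - A ^ n * (adjoint A) ^ n with hK
      have heq : C n = K * T + T * K - K * T * K := by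
        rw [hC, hf, hK]
        noncomm_ring
      rw [heq]
      have h1 := aux_compact_mul_right K T (hKn n)
      have h2 := aux_compact_mul_left T K (hKn n)
      have h3 := aux_compact_mul_right (K * T) K (aux_compact_mul_right K T (hKn n))
      have hcoe : ⇑(K * T + T * K - K * T * K)
          = (⇑(K * T) + ⇑(T * K)) - ⇑(K * T * K) := by ext x; simp
      rw [hcoe]
      exact (h1.add h2).sub h3
    -- T is a norm limit of Cₙ
    have hlim : Tendsto C atTop (𝓝 T) := by
      rw [tendsto_iff_norm_sub_tendsto_zero]
      apply squeeze_zero (fun n => norm_nonneg _) (g := fun n => M₁ * ‖f n‖ * M₂)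
      · intro n
        have : C n - T = -(A ^ n * f n * (adjoint A) ^ n) := by rw [hC]; exact sub_sub_cancel_left _ _
        rw [this, norm_neg]
        calc ‖A ^ n * f n * (adjoint A) ^ n‖
            ≤ ‖A ^ n * f n‖ * ‖(adjoint A) ^ n‖ := norm_mul_le _ _
          _ ≤ ‖A ^ n * f n‖ * M₂ := by
              apply mul_le_mul_of_nonneg_left (hM₂ n) (norm_nonneg _)
          _ ≤ (‖A ^ n‖ * ‖f n‖) * M₂ := by
              apply mul_le_mul_of_nonneg_right (norm_mul_le _ _) hM₂0
          _ ≤ (M₁ * ‖f n‖) * M₂ := by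
              apply mul_le_mul_of_nonneg_right
                (mul_le_mul_of_nonneg_right (hM₁ n) (norm_nonneg _)) hM₂0
      · have h2' : Tendsto (fun n => ‖f n‖) atTop (𝓝 0) := by
          have := h2
          rw [tendsto_iff_norm_sub_tendsto_zero] at this
          simpa using this
        have := (h2'.const_mul M₁).mul_const M₂
        simpa using this
    exact isClosed_setOf_isCompactOperator.mem_of_tendsto hlim
      (Eventually.of_forall hCcpt)
  tfae_finish
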